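/- For the n-peakon function u(x) = Σ_{j=1}^n m_j e^{-|x-x_j|} with distinct points x_j, the squared H¹ norm satisfies ∫_ℝ (u² + uₓ²) dx = Σ_{j=1}^n 2 m_j u(x_j) = Σ_{j,k=1}^n 2 m_j m_k e^{-|x_j - x_k|}. -/

import Mathlib

section PeakonAux
open Real MeasureTheory Set

noncomputable def pk (a x : ℝ) : ℝ := Real.exp (-|x - a|)
noncomputable def pk' (a x : ℝ) : ℝ := if x < a then Real.exp (x - a) else -Real.exp (a - x)

lemma pk_of_le {a x : ℝ} (h : x ≤ a) : pk a x = Real.exp (x - a) := by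
  rw [pk, abs_of_nonpos (by linarith), neg_neg]

lemma pk_of_ge {a x : ℝ} (h : a ≤ x) : pk a x = Real.exp (a - x) := by
  rw [pk, abs_of_nonneg (by linarith)]; ring_nf

lemma pk'_of_lt {a x : ℝ} (h : x < a) : pk' a x = Real.exp (x - a) := if_pos h
lemma pk'_of_ge {a x : ℝ} (h : a ≤ x) : pk' a x = -Real.exp (a - x) := if_neg (not_lt.mpr h)

lemma abs_pk' (a x : ℝ) : |pk' a x| = pk a x := by
  rcases lt_or_ge x a with h | h
  · rw [pk'_of_lt h, pk_of_le h.le, abs_of_pos (Real.exp_pos _)]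
  · rw [pk'_of_ge h, pk_of_ge h, abs_neg, abs_of_pos (Real.exp_pos _)]

lemma pk_pos (a x : ℝ) : 0 < pk a x := Real.exp_pos _
lemma pk_le_one (a x : ℝ) : pk a x ≤ 1 :=
  Real.exp_le_one_iff.mpr (neg_nonpos.mpr (abs_nonneg _))

lemma continuous_pk (a : ℝ) : Continuous (pk a) :=
  Real.continuous_exp.comp ((continuous_abs.comp (continuous_id.sub continuous_const)).neg)

lemma measurable_pk' (a : ℝ) : Measurable (pk' a) := by
  unfold pk'
  exact Measurable.ite measurableSet_Iio (by fun_prop) ((measurable_const.sub measurable_id).exp.neg)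

lemma hasDerivAt_pk {a x : ℝ} (h : x ≠ a) : HasDerivAt (pk a) (pk' a x) x := by
  rcases lt_or_gt_of_ne h with h | h
  · have h1 : HasDerivAt (fun y : ℝ => Real.exp (y - a)) (Real.exp (x - a) * 1) x :=
      ((hasDerivAt_id x).sub_const a).exp
    rw [mul_one] at h1
    rw [pk'_of_lt h]
    refine h1.congr_of_eventuallyEq ?_
    filter_upwards [Iio_mem_nhds h] with y hy
    exact pk_of_le (le_of_lt hy)
  · have h1 : HasDerivAt (fun y : ℝ => Real.exp (a - y)) (Real.exp (a - x) * (-1)) x :=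
      ((hasDerivAt_id x).const_sub a).exp
    rw [mul_neg_one] at h1
    rw [pk'_of_ge h.le]
    refine h1.congr_of_eventuallyEq ?_
    filter_upwards [Ioi_mem_nhds h] with y hy
    exact pk_of_ge (le_of_lt hy)

lemma integrable_pk (a : ℝ) : Integrable (pk a) := by
  rw [← integrableOn_univ, ← Set.Iic_union_Ioi (a := a)]
  refine IntegrableOn.union ?_ ?_
  · refine IntegrableOn.congr_fun ((integrableOn_exp_Iic a).const_mul (Real.exp (-a))) ?_ measurableSet_Iic
    intro x hx
    simp only [pk_of_le hx, ← Real.exp_add]; ring_nf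
  · have h := exp_neg_integrableOn_Ioi a (one_pos)
    refine IntegrableOn.congr_fun (h.const_mul (Real.exp a)) ?_ measurableSet_Ioi
    intro x hx
    simp only [pk_of_ge (le_of_lt hx), ← Real.exp_add]; ring_nf

lemma integrable_pkmul (a b : ℝ) : Integrable (fun x => pk a x * pk b x) := by
  refine (integrable_pk a).mono
    (((continuous_pk a).mul (continuous_pk b)).aestronglyMeasurable) (ae_of_all _ fun x => ?_)
  rw [Real.norm_eq_abs, Real.norm_eq_abs, abs_mul, abs_of_pos (pk_pos a x),
    abs_of_pos (pk_pos b x)]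
  exact mul_le_of_le_one_right (pk_pos a x).le (pk_le_one b x)

lemma integrable_pk'mul (a b : ℝ) : Integrable (fun x => pk' a x * pk' b x) := by
  refine (integrable_pk a).mono
    (((measurable_pk' a).mul (measurable_pk' b)).aestronglyMeasurable) (ae_of_all _ fun x => ?_)
  rw [Real.norm_eq_abs, Real.norm_eq_abs, abs_mul, abs_pk', abs_pk', abs_of_pos (pk_pos a x)]
  exact mul_le_of_le_one_right (pk_pos a x).le (pk_le_one b x)

lemma integrable_P (a b : ℝ) :
    Integrable (fun x => pk a x * pk b x + pk' a x * pk' b x) :=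
  (integrable_pkmul a b).add (integrable_pk'mul a b)

lemma int_exp_Ioi (b c : ℝ) : ∫ x in Ioi b, Real.exp (c - 2*x) = Real.exp (c - 2*b) / 2 := by
  have h2 : ∀ d : ℝ, ∫ x in Ioi d, Real.exp (c - x) = Real.exp (c - d) := by
    intro d
    have e : ∀ x : ℝ, Real.exp (c - x) = Real.exp c * Real.exp (-x) := fun x => by
      rw [← Real.exp_add]; ring_nf
    simp_rw [e, integral_const_mul, integral_exp_neg_Ioi]
  have h := integral_comp_mul_left_Ioi (fun y => Real.exp (c - y)) b two_pos
  simp only [smul_eq_mul] at h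
  rw [h, h2]
  ring

lemma int_exp_Iic (a c : ℝ) : ∫ x in Iic a, Real.exp (2*x - c) = Real.exp (2*a - c) / 2 := by
  have h := integral_comp_neg_Iic a (fun y => Real.exp (-c - 2*y))
  have e : ∀ x : ℝ, Real.exp (-c - 2 * (-x)) = Real.exp (2*x - c) := fun x => by ring_nf
  simp_rw [e] at h
  rw [h, int_exp_Ioi]
  ring_nf

lemma key_int {a b : ℝ} (hab : a ≤ b) :
    (∫ x : ℝ, (pk a x * pk b x + pk' a x * pk' b x)) = 2 * Real.exp (a - b) := by
  set h : ℝ → ℝ := fun x => pk a x * pk b x + pk' a x * pk' b x with hh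
  have hint := integrable_P a b
  have hdisj1 : Disjoint (Iio a) (Ici a) := Iio_disjoint_Ici le_rfl
  have hdisj2 : Disjoint (Ico a b) (Ici b) := by
    refine Set.disjoint_left.mpr ?_
    rintro x ⟨_, h1⟩ h2
    exact absurd h2 (not_le.mpr h1)
  have hsplit1 : (∫ x, h x) = (∫ x in Iio a, h x) + ∫ x in Ici a, h x := by
    rw [← setIntegral_union hdisj1 measurableSet_Ici hint.integrableOn hint.integrableOn,
      Iio_union_Ici, setIntegral_univ]
  have hsplit2 : (∫ x in Ici a, h x) = (∫ x in Ico a b, h x) + ∫ x in Ici b, h x := by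
    rw [← setIntegral_union hdisj2 measurableSet_Ici hint.integrableOn hint.integrableOn,
      Ico_union_Ici_eq_Ici hab]
  have p1 : (∫ x in Iio a, h x) = Real.exp (a - b) := by
    have he : EqOn h (fun x => 2 * Real.exp (2*x - (a+b))) (Iio a) := by
      intro x hx
      have hx' : x < a := hx
      simp only [hh, pk_of_le hx'.le, pk_of_le (hx'.le.trans hab), pk'_of_lt hx',
        pk'_of_lt (hx'.trans_le hab), ← Real.exp_add]
      ring_nf
    rw [setIntegral_congr_fun measurableSet_Iio he, ← integral_Iic_eq_integral_Iio,
      integral_const_mul, int_exp_Iic]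
    ring_nf
  have p2 : (∫ x in Ico a b, h x) = 0 := by
    have he : EqOn h (fun _ => (0:ℝ)) (Ico a b) := by
      rintro x ⟨hx1, hx2⟩
      simp only [hh, pk_of_ge hx1, pk_of_le hx2.le, pk'_of_ge hx1, pk'_of_lt hx2]
      ring
    rw [setIntegral_congr_fun measurableSet_Ico he, integral_const, smul_zero]
  have p3 : (∫ x in Ici b, h x) = Real.exp (a - b) := by
    have he : EqOn h (fun x => 2 * Real.exp ((a+b) - 2*x)) (Ici b) := by
      intro x hx
      have hx' : b ≤ x := hx
      simp only [hh, pk_of_ge (hab.trans hx'), pk_of_ge hx', pk'_of_ge (hab.trans hx'),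
        pk'_of_ge hx', neg_mul_neg, ← Real.exp_add]
      ring_nf
    rw [setIntegral_congr_fun measurableSet_Ici he, integral_Ici_eq_integral_Ioi,
      integral_const_mul, int_exp_Ioi]
    ring_nf
  rw [hsplit1, hsplit2, p1, p2, p3]; ring


lemma key_int' (a b : ℝ) :
    (∫ x : ℝ, (pk a x * pk b x + pk' a x * pk' b x)) = 2 * Real.exp (-|a - b|) := by
  rcases le_total a b with h | h
  · rw [key_int h, abs_of_nonpos (by linarith), neg_neg]
  · have e : (fun x => pk a x * pk b x + pk' a x * pk' b x)
        = fun x => pk b x * pk a x + pk' b x * pk' a x := by funext x; ring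
    rw [e, key_int h, abs_of_nonneg (by linarith)]
    congr 2
    ring


end PeakonAux


open Real MeasureTheory Finset

/-- For the `n`-peakon function with distinct sites, the squared `H¹` norm equals
`∑ⱼ 2 mⱼ u(xⱼ) = ∑ⱼₖ 2 mⱼ mₖ e^{-|xⱼ - xₖ|}`. -/
theorem n_peakon_H1_norm_sq
    (n : ℕ) (m : Fin n → ℝ) (X : Fin n → ℝ)
    (hX : Function.Injective X)
    (u ux : ℝ → ℝ)
    (hu : ∀ x, u x = ∑ j, m j * Real.exp (-|x - X j|))
    (hux : ∀ x, (∀ j, x ≠ X j) → HasDerivAt u (ux x) x) :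
    (∫ x : ℝ, (u x ^ 2 + ux x ^ 2)) = ∑ j, 2 * m j * u (X j) ∧
    (∫ x : ℝ, (u x ^ 2 + ux x ^ 2)) =
      ∑ j, ∑ k, 2 * m j * m k * Real.exp (-|X j - X k|) := by

  have hS2 : ∀ x, (∀ j, x ≠ X j) → HasDerivAt u (∑ j, m j * pk' (X j) x) x := by
    intro x hx
    have hu' : u = fun y => ∑ j, m j * pk (X j) y := funext fun y => hu y
    rw [hu']
    exact HasDerivAt.fun_sum fun j _ => (hasDerivAt_pk (hx j)).const_mul (m j)
  have hae : (fun x => u x ^ 2 + ux x ^ 2) =ᵐ[volume]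
      fun x => (∑ j, m j * pk (X j) x) ^ 2 + (∑ j, m j * pk' (X j) x) ^ 2 := by
    have hnull : volume (Set.range X) = 0 := (Set.finite_range X).measure_zero _
    have hmem : ∀ᵐ x : ℝ, x ∉ Set.range X := by
      rw [ae_iff]
      simp only [not_not]
      exact hnull
    filter_upwards [hmem] with x hx
    have hx' : ∀ j, x ≠ X j := fun j h => hx ⟨j, h.symm⟩
    rw [hu x, (hux x hx').unique (hS2 x hx')]
    simp only [pk]
  have base : ∀ j k : Fin n, Integrable (fun x => m j * pk (X j) x * (m k * pk (X k) x)
      + m j * pk' (X j) x * (m k * pk' (X k) x)) := by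
    intro j k
    have e : (fun x => m j * pk (X j) x * (m k * pk (X k) x)
        + m j * pk' (X j) x * (m k * pk' (X k) x))
        = fun x => (m j * m k) * (pk (X j) x * pk (X k) x + pk' (X j) x * pk' (X k) x) := by
      funext x; ring
    rw [e]
    exact (integrable_P _ _).const_mul _
  have key2 : (∫ x : ℝ, ((∑ j, m j * pk (X j) x) ^ 2 + (∑ j, m j * pk' (X j) x) ^ 2))
      = ∑ j, ∑ k, 2 * m j * m k * Real.exp (-|X j - X k|) := by
    have e : ∀ x : ℝ, (∑ j, m j * pk (X j) x) ^ 2 + (∑ j, m j * pk' (X j) x) ^ 2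
        = ∑ j, ∑ k, (m j * pk (X j) x * (m k * pk (X k) x)
            + m j * pk' (X j) x * (m k * pk' (X k) x)) := by
      intro x
      rw [sq, sq, Finset.sum_mul_sum, Finset.sum_mul_sum, ← Finset.sum_add_distrib]
      exact Finset.sum_congr rfl fun j _ => by rw [← Finset.sum_add_distrib]
    simp_rw [e]
    rw [integral_finset_sum _ (fun j _ => integrable_finset_sum _ (fun k _ => base j k))]
    refine Finset.sum_congr rfl fun j _ => ?_
    rw [integral_finset_sum _ (fun k _ => base j k)]
    refine Finset.sum_congr rfl fun k _ => ?_
    have e2 : (fun x => m j * pk (X j) x * (m k * pk (X k) x)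
        + m j * pk' (X j) x * (m k * pk' (X k) x))
        = fun x => (m j * m k) * (pk (X j) x * pk (X k) x + pk' (X j) x * pk' (X k) x) := by
      funext x; ring
    rw [e2, integral_const_mul, key_int']
    ring
  constructor
  · rw [integral_congr_ae hae, key2]
    refine Finset.sum_congr rfl fun j _ => ?_
    rw [hu (X j), Finset.mul_sum]
    exact Finset.sum_congr rfl fun k _ => by ring
  · rw [integral_congr_ae hae, key2]
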